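/- Let m ≥ 1 and let G be a simple graph on the vertex set {0, …, m−1} admitting no proper 3-coloring. Let ψ, ψ' ∈ ℂ^m ⊗ ℂ³ be unit vectors in decomposed form with amplitudes (α_v, β_{v,j}) and (α'_v, β'_{v,j}) respectively, and suppose that both states satisfy the following: ‖(I_m ⊗ u₃u₃*) ψ‖² ≥ 1/12 and ‖(I_m ⊗ u₃u₃*) ψ'‖² ≥ 1/12, and ‖((I_m − u_m u_m*) ⊗ u₃u₃*) ψ‖² ≤ 1/(200 m²) and ‖((I_m − u_m u_m*) ⊗ u₃u₃*) ψ'‖² ≤ 1/(200 m²). Then the pairwise consistency rejection probability satisfies R_sv + R_edge(G) ≥ 1/(6000 m²), where R_sv = Σ_{v<m} Σ_{j≠j'} |α_v|² |β_{v,j}|² |α'_v|² |β'_{v,j'}|² and R_edge(G) = Σ_{{u,v} ∈ E(G)} Σ_{j<3} (|α_u|²|β_{u,j}|²|α'_v|²|β'_{v,j}|² + |α_v|²|β_{v,j}|²|α'_u|²|β'_{u,j}|²). -/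

import Mathlib

set_option maxHeartbeats 1000000

/-- A function `ι → ℂ` viewed as a vector of the Euclidean space `ℂ^ι`. -/
noncomputable def toEuc {ι : Type*} [Fintype ι] (f : ι → ℂ) : EuclideanSpace ℂ ι := WithLp.toLp 2 f

lemma norm_toEuc_sq {ι : Type*} [Fintype ι] (f : ι → ℂ) :
    ‖toEuc f‖ ^ 2 = ∑ i, ‖f i‖ ^ 2 := by
  rw [EuclideanSpace.norm_eq, Real.sq_sqrt (by positivity)]
  simp [toEuc]

lemma key_amp (m : ℕ) (hm : 1 ≤ m) (α : Fin m → ℂ) (β : Fin m → Fin 3 → ℂ)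
    (hβ : ∀ v, ∑ j, ‖β v j‖ ^ 2 = 1)
    (hp : ‖toEuc (fun q : Fin m × Fin 3 =>
        (1 / 3 : ℂ) * (α q.1 * ∑ j', β q.1 j'))‖ ^ 2 ≥ 1 / 12)
    (hRunif : ‖toEuc (fun q : Fin m × Fin 3 =>
          (1 / 3 : ℂ) * (α q.1 * ∑ j', β q.1 j')
            - (1 / (3 * (m : ℂ))) * ∑ v', (α v' * ∑ j', β v' j'))‖ ^ 2
      ≤ 1 / (200 * (m : ℝ) ^ 2)) :
    ∀ v, 41 / (1200 * (m : ℝ)) ≤ ‖α v‖ ^ 2 := by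
  intro v
  have hm0 : (0:ℝ) < m := by exact_mod_cast hm
  have hm1 : (1:ℝ) ≤ m := by exact_mod_cast hm
  have hmC : (m:ℂ) ≠ 0 := Nat.cast_ne_zero.mpr (by omega)
  set s : Fin m → ℂ := fun v => α v * ∑ j, β v j with hs
  set μ : ℂ := (∑ v, s v) / m with hμ
  have habs3 : ‖(1/3 : ℂ)‖ = 1/3 := by
    rw [norm_div]; simp
  -- step 1 : ∑ |s v|^2 ≥ 1/4
  rw [norm_toEuc_sq, Fintype.sum_prod_type] at hp
  have e1 : ∑ v, ∑ _j : Fin 3, ‖(1/3:ℂ) * s v‖ ^ 2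
      = ∑ v, (1/3) * ‖s v‖ ^ 2 := by
    refine Finset.sum_congr rfl fun v _ => ?_
    rw [Finset.sum_const, Finset.card_univ, Fintype.card_fin, nsmul_eq_mul, norm_mul, habs3]
    push_cast; ring
  rw [e1, ← Finset.mul_sum] at hp
  have h1 : (1:ℝ)/4 ≤ ∑ v, ‖s v‖ ^ 2 := by linarith
  -- step 2 : ∑ |s v - μ|^2 ≤ 3/(200 m^2)
  rw [norm_toEuc_sq, Fintype.sum_prod_type] at hRunif
  have e2 : ∑ v, ∑ _j : Fin 3,
        ‖(1/3:ℂ) * s v - (1/(3*(m:ℂ))) * ∑ v', s v'‖ ^ 2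
      = ∑ v, (1/3) * ‖s v - μ‖ ^ 2 := by
    refine Finset.sum_congr rfl fun w _ => ?_
    rw [Finset.sum_const, Finset.card_univ, Fintype.card_fin, nsmul_eq_mul]
    have : (1/3:ℂ) * s w - (1/(3*(m:ℂ))) * ∑ v', s v' = (1/3:ℂ) * (s w - μ) := by
      rw [hμ]; field_simp
    rw [this, norm_mul, habs3]; push_cast; ring
  rw [e2, ← Finset.mul_sum] at hRunif
  have h2 : ∑ v, ‖s v - μ‖ ^ 2 ≤ 3/(200 * (m:ℝ)^2) := by
    have e : (3:ℝ)/(200*(m:ℝ)^2) = 3 * (1/(200*(m:ℝ)^2)) := by ring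
    rw [e]; linarith
  -- parallel axis : ∑|s-μ|² = ∑|s|² - m|μ|²
  have hSμ : ∑ w, s w = (m:ℂ) * μ := by rw [hμ]; field_simp
  have hpar : ∑ w, ‖s w - μ‖ ^ 2
      = (∑ w, ‖s w‖ ^ 2) - m * ‖μ‖ ^ 2 := by
    have e3 : ∀ w, ‖s w - μ‖ ^ 2
        = ‖s w‖ ^ 2 + ‖μ‖ ^ 2 - 2 * (s w * (starRingEnd ℂ) μ).re := by
      intro w
      rw [Complex.sq_norm, Complex.sq_norm, Complex.sq_norm, Complex.normSq_sub]
    rw [Finset.sum_congr rfl fun w _ => e3 w]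
    have e4 : ∑ w, (s w * (starRingEnd ℂ) μ).re = m * ‖μ‖ ^ 2 := by
      rw [← Complex.re_sum]
      · rw [← Finset.sum_mul, hSμ, mul_assoc, Complex.mul_conj]
        rw [Complex.sq_norm]
        simp [Complex.mul_re]
    rw [Finset.sum_sub_distrib, Finset.sum_add_distrib, ← Finset.mul_sum, e4,
      Finset.sum_const, Finset.card_univ, Fintype.card_fin, nsmul_eq_mul]
    ring
  -- |μ|² ≥ 47/(200 m)
  have hμ2 : 47/(200 * (m:ℝ)) ≤ ‖μ‖ ^ 2 := by
    have hmm : 3/(200 * (m:ℝ)^2) ≤ 3/200 := by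
      rw [div_le_div_iff₀ (by positivity) (by norm_num)]
      nlinarith
    have : (47:ℝ)/200 ≤ m * ‖μ‖ ^ 2 := by nlinarith
    rw [div_le_iff₀ (by positivity)]
    nlinarith
  -- single term
  have hsv : ‖s v - μ‖ ^ 2 ≤ 3/(200 * (m:ℝ)^2) := by
    refine le_trans (Finset.single_le_sum (f := fun w => ‖s w - μ‖ ^ 2)
      (fun w _ => by positivity) (Finset.mem_univ v)) h2
  -- |μ| ≤ |s v| + |s v - μ|
  have htri : ‖μ‖ ≤ ‖s v‖ + ‖s v - μ‖ := by
    have h := norm_add_le (s v) (μ - s v)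
    rw [add_sub_cancel] at h
    rw [norm_sub_rev μ (s v)] at h
    exact h
  have hsq : ‖μ‖ ^ 2 ≤ 2 * ‖s v‖ ^ 2 + 2 * ‖s v - μ‖ ^ 2 := by
    nlinarith [norm_nonneg μ, norm_nonneg (s v), norm_nonneg (s v - μ),
      sq_nonneg (‖s v‖ - ‖s v - μ‖)]
  -- |s v|² ≥ 41/(400 m)
  have hsv2 : 41/(400 * (m:ℝ)) ≤ ‖s v‖ ^ 2 := by
    have hmm2 : 3/(200 * (m:ℝ)^2) ≤ 3/(200 * (m:ℝ)) := by
      rw [div_le_div_iff₀ (by positivity) (by positivity)]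
      nlinarith
    have h41 : (41:ℝ)/(400*(m:ℝ)) = 47/(200*(m:ℝ))/2 - 3/(200*(m:ℝ)) := by
      field_simp; ring
    rw [h41]
    linarith [hμ2, hsq, hsv, hmm2]
  -- |∑ β v j|² ≤ 3
  have hβ3 : ‖∑ j, β v j‖ ^ 2 ≤ 3 := by
    have htr : ‖∑ j, β v j‖ ≤ ∑ j, ‖β v j‖ :=
      norm_sum_le _ _
    have h1 := hβ v
    simp only [Fin.sum_univ_three] at htr h1 ⊢
    nlinarith [norm_nonneg (β v 0 + β v 1 + β v 2), norm_nonneg (β v 0),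
      norm_nonneg (β v 1), norm_nonneg (β v 2),
      sq_nonneg (‖β v 0‖ - ‖β v 1‖),
      sq_nonneg (‖β v 0‖ - ‖β v 2‖),
      sq_nonneg (‖β v 1‖ - ‖β v 2‖)]
  -- conclude
  have hsplit : ‖s v‖ ^ 2 = ‖α v‖ ^ 2 * ‖∑ j, β v j‖ ^ 2 := by
    rw [hs]; simp [norm_mul, mul_pow]
  have hαnn : (0:ℝ) ≤ ‖α v‖ ^ 2 := by positivity
  have hAB : ‖α v‖^2 * ‖∑ j, β v j‖^2 ≤ 3 * ‖α v‖^2 := by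
    nlinarith [hαnn, hβ3]
  rw [div_le_iff₀ (by positivity)]
  rw [div_le_iff₀ (by positivity)] at hsv2
  calc (41:ℝ) ≤ ‖s v‖^2 * (400 * m) := hsv2
    _ = ‖α v‖^2 * ‖∑ j, β v j‖^2 * (400*(m:ℝ)) := by rw [hsplit]
    _ ≤ (3 * ‖α v‖^2) * (400*(m:ℝ)) := by
        exact mul_le_mul_of_nonneg_right hAB (by positivity)
    _ = ‖α v‖^2 * (1200 * m) := by ring

/-- **Soundness of the consistency test (Chen–Drucker).**
If `G` admits no proper 3-coloring, and `ψ, ψ'` are decomposed unit vectors in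
`ℂ^m ⊗ ℂ³` whose color registers yield the uniform-projection outcome with
probability at least `1/12` and whose Uniformity-Test rejection probabilities
are at most `1/(200 m²)`, then the pairwise consistency rejection probability
satisfies `R_sv + R_edge(G) ≥ 1/(6000 m²)`. Each edge `{u,v}` of `G` is
counted once (as the ordered pair with `u < v`), with both orientation terms. -/
theorem chen_drucker_consistency_soundness (m : ℕ) (hm : 1 ≤ m)
    (G : SimpleGraph (Fin m)) [DecidableRel G.Adj]
    (hG : ¬ G.Colorable 3)
    (α α' : Fin m → ℂ) (β β' : Fin m → Fin 3 → ℂ)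
    (hα : ∑ v, ‖α v‖ ^ 2 = 1)
    (hα' : ∑ v, ‖α' v‖ ^ 2 = 1)
    (hβ : ∀ v, ∑ j, ‖β v j‖ ^ 2 = 1)
    (hβ' : ∀ v, ∑ j, ‖β' v j‖ ^ 2 = 1)
    (hp : ‖toEuc (fun q : Fin m × Fin 3 =>
        (1 / 3 : ℂ) * (α q.1 * ∑ j', β q.1 j'))‖ ^ 2 ≥ 1 / 12)
    (hp' : ‖toEuc (fun q : Fin m × Fin 3 =>
        (1 / 3 : ℂ) * (α' q.1 * ∑ j', β' q.1 j'))‖ ^ 2 ≥ 1 / 12)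
    (hRunif : ‖toEuc (fun q : Fin m × Fin 3 =>
          (1 / 3 : ℂ) * (α q.1 * ∑ j', β q.1 j')
            - (1 / (3 * (m : ℂ))) * ∑ v', (α v' * ∑ j', β v' j'))‖ ^ 2
      ≤ 1 / (200 * (m : ℝ) ^ 2))
    (hRunif' : ‖toEuc (fun q : Fin m × Fin 3 =>
          (1 / 3 : ℂ) * (α' q.1 * ∑ j', β' q.1 j')
            - (1 / (3 * (m : ℂ))) * ∑ v', (α' v' * ∑ j', β' v' j'))‖ ^ 2
      ≤ 1 / (200 * (m : ℝ) ^ 2)) :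
    (∑ v, ∑ j, ∑ j', (if j = j' then 0 else
        ‖α v‖ ^ 2 * ‖β v j‖ ^ 2 *
          ‖α' v‖ ^ 2 * ‖β' v j'‖ ^ 2))
    + (∑ u, ∑ v, if G.Adj u v ∧ u < v then ∑ j : Fin 3,
        (‖α u‖ ^ 2 * ‖β u j‖ ^ 2 *
            ‖α' v‖ ^ 2 * ‖β' v j‖ ^ 2
          + ‖α v‖ ^ 2 * ‖β v j‖ ^ 2 *
            ‖α' u‖ ^ 2 * ‖β' u j‖ ^ 2) else 0)
    ≥ 1 / (6000 * (m : ℝ) ^ 2) := by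
  have hm0 : (0:ℝ) < m := by exact_mod_cast hm
  have hA := key_amp m hm α β hβ hp hRunif
  have hA' := key_amp m hm α' β' hβ' hp' hRunif'
  rw [ge_iff_le]
  -- nonnegativity of both total sums
  have hsv_nonneg : ∀ v : Fin m, (0:ℝ) ≤ ∑ j, ∑ j', (if j = j' then 0 else
      ‖α v‖ ^ 2 * ‖β v j‖ ^ 2 *
        ‖α' v‖ ^ 2 * ‖β' v j'‖ ^ 2) := by
    intro v
    refine Finset.sum_nonneg fun j _ => Finset.sum_nonneg fun j' _ => ?_
    split
    · exact le_rfl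
    · positivity
  have hedge_nonneg : ∀ u v : Fin m, (0:ℝ) ≤ (if G.Adj u v ∧ u < v then ∑ j : Fin 3,
      (‖α u‖ ^ 2 * ‖β u j‖ ^ 2 *
          ‖α' v‖ ^ 2 * ‖β' v j‖ ^ 2
        + ‖α v‖ ^ 2 * ‖β v j‖ ^ 2 *
          ‖α' u‖ ^ 2 * ‖β' u j‖ ^ 2) else 0) := by
    intro u v
    split
    · positivity
    · exact le_rfl
  by_cases hcase : ∀ v : Fin m,
      17/20 < ∑ j, ‖β v j‖ ^ 2 * ‖β' v j‖ ^ 2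
  · -- Case 2: color registers consistent everywhere; use an edge
    have hple1 : ∀ w j, ‖β w j‖ ^ 2 ≤ 1 := by
      intro w j
      calc ‖β w j‖^2 ≤ ∑ k, ‖β w k‖^2 :=
            Finset.single_le_sum (f := fun k => ‖β w k‖^2)
              (fun k _ => by positivity) (Finset.mem_univ j)
        _ = 1 := hβ w
    have hp'le1 : ∀ w j, ‖β' w j‖ ^ 2 ≤ 1 := by
      intro w j
      calc ‖β' w j‖^2 ≤ ∑ k, ‖β' w k‖^2 :=
            Finset.single_le_sum (f := fun k => ‖β' w k‖^2)
              (fun k _ => by positivity) (Finset.mem_univ j)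
        _ = 1 := hβ' w
    have hmax : ∀ w : Fin m, ∃ j : Fin 3, ∀ k : Fin 3,
        ‖β w k‖^2 * ‖β' w k‖^2
          ≤ ‖β w j‖^2 * ‖β' w j‖^2 := by
      intro w
      obtain ⟨j, -, hj⟩ := Finset.exists_max_image Finset.univ
        (fun k : Fin 3 => ‖β w k‖^2 * ‖β' w k‖^2)
        ⟨0, Finset.mem_univ 0⟩
      exact ⟨j, fun k => hj k (Finset.mem_univ k)⟩
    choose col hcol using hmax
    have hq : ∀ w, 17/60 < ‖β w (col w)‖^2 * ‖β' w (col w)‖^2 := by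
      intro w
      have hsum := hcase w
      rw [Fin.sum_univ_three] at hsum
      have h0 := hcol w 0; have h1 := hcol w 1; have h2 := hcol w 2
      linarith
    have hpb : ∀ w, 17/60 ≤ ‖β w (col w)‖^2 := by
      intro w
      nlinarith [hq w, hp'le1 w (col w),
        (by positivity : (0:ℝ) ≤ ‖β w (col w)‖^2)]
    have hpb' : ∀ w, 17/60 ≤ ‖β' w (col w)‖^2 := by
      intro w
      nlinarith [hq w, hple1 w (col w),
        (by positivity : (0:ℝ) ≤ ‖β' w (col w)‖^2)]
    have hedge : ∃ a b : Fin m, G.Adj a b ∧ a < b ∧ col a = col b := by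
      by_contra hcon
      push_neg at hcon
      refine hG ⟨SimpleGraph.Coloring.mk col fun {u w} huw => ?_⟩
      rcases lt_trichotomy u w with h | h | h
      · exact hcon u w huw h
      · exact absurd h (G.ne_of_adj huw)
      · intro hcc; exact hcon w u (huw.symm) h hcc.symm
    obtain ⟨a, b, hadj, hab, hcc⟩ := hedge
    have hb1 : 17/60 ≤ ‖β b (col a)‖^2 := by rw [hcc]; exact hpb b
    have hb2 : 17/60 ≤ ‖β' b (col a)‖^2 := by rw [hcc]; exact hpb' b
    have hterm : (2:ℝ) * ((41/(1200*(m:ℝ))) * (17/60) * (41/(1200*(m:ℝ))) * (17/60))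
        ≤ ∑ j : Fin 3,
          (‖α a‖^2 * ‖β a j‖^2 *
              ‖α' b‖^2 * ‖β' b j‖^2
            + ‖α b‖^2 * ‖β b j‖^2 *
              ‖α' a‖^2 * ‖β' a j‖^2) := by
      have h1 : (41/(1200*(m:ℝ))) * (17/60) * (41/(1200*(m:ℝ))) * (17/60)
          ≤ ‖α a‖^2 * ‖β a (col a)‖^2 *
              ‖α' b‖^2 * ‖β' b (col a)‖^2 := by
        gcongr
        all_goals first | exact hA a | exact hpb a | exact hA' b | exact hb2
      have h2 : (41/(1200*(m:ℝ))) * (17/60) * (41/(1200*(m:ℝ))) * (17/60)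
          ≤ ‖α b‖^2 * ‖β b (col a)‖^2 *
              ‖α' a‖^2 * ‖β' a (col a)‖^2 := by
        gcongr
        all_goals first | exact hA b | exact hb1 | exact hA' a | exact hpb' a
      refine le_trans ?_ (Finset.single_le_sum (f := fun j =>
          ‖α a‖^2 * ‖β a j‖^2 *
              ‖α' b‖^2 * ‖β' b j‖^2
            + ‖α b‖^2 * ‖β b j‖^2 *
              ‖α' a‖^2 * ‖β' a j‖^2)
        (fun j _ => by positivity) (Finset.mem_univ (col a)))
      linarith
    have hRe1 : (∑ j : Fin 3,
          (‖α a‖^2 * ‖β a j‖^2 *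
              ‖α' b‖^2 * ‖β' b j‖^2
            + ‖α b‖^2 * ‖β b j‖^2 *
              ‖α' a‖^2 * ‖β' a j‖^2))
        ≤ ∑ u, ∑ v, (if G.Adj u v ∧ u < v then ∑ j : Fin 3,
          (‖α u‖ ^ 2 * ‖β u j‖ ^ 2 *
              ‖α' v‖ ^ 2 * ‖β' v j‖ ^ 2
            + ‖α v‖ ^ 2 * ‖β v j‖ ^ 2 *
              ‖α' u‖ ^ 2 * ‖β' u j‖ ^ 2) else 0) := by
      have step2 : (if G.Adj a b ∧ a < b then ∑ j : Fin 3,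
          (‖α a‖ ^ 2 * ‖β a j‖ ^ 2 *
              ‖α' b‖ ^ 2 * ‖β' b j‖ ^ 2
            + ‖α b‖ ^ 2 * ‖β b j‖ ^ 2 *
              ‖α' a‖ ^ 2 * ‖β' a j‖ ^ 2) else 0)
          ≤ ∑ v, (if G.Adj a v ∧ a < v then ∑ j : Fin 3,
          (‖α a‖ ^ 2 * ‖β a j‖ ^ 2 *
              ‖α' v‖ ^ 2 * ‖β' v j‖ ^ 2
            + ‖α v‖ ^ 2 * ‖β v j‖ ^ 2 *
              ‖α' a‖ ^ 2 * ‖β' a j‖ ^ 2) else 0) :=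
        Finset.single_le_sum (fun w _ => hedge_nonneg a w) (Finset.mem_univ b)
      rw [if_pos ⟨hadj, hab⟩] at step2
      refine le_trans step2 (Finset.single_le_sum
        (fun u _ => Finset.sum_nonneg fun w _ => hedge_nonneg u w) (Finset.mem_univ a))
    have hnum : (1:ℝ)/(6000*(m:ℝ)^2)
        ≤ (2:ℝ) * ((41/(1200*(m:ℝ))) * (17/60) * (41/(1200*(m:ℝ))) * (17/60)) := by
      have e : (2:ℝ) * ((41/(1200*(m:ℝ))) * (17/60) * (41/(1200*(m:ℝ))) * (17/60))
          = 971618/(5184000000*(m:ℝ)^2) := by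
        field_simp; ring
      rw [e, div_le_div_iff₀ (by positivity) (by positivity)]
      nlinarith [sq_nonneg (m:ℝ)]
    have hRsv0 : (0:ℝ) ≤ ∑ v, ∑ j, ∑ j', (if j = j' then 0 else
        ‖α v‖ ^ 2 * ‖β v j‖ ^ 2 *
          ‖α' v‖ ^ 2 * ‖β' v j'‖ ^ 2) :=
      Finset.sum_nonneg fun w _ => hsv_nonneg w
    linarith
  · -- Case 1: some vertex has inconsistent color distributions
    push_neg at hcase
    obtain ⟨v, hv⟩ := hcase
    have hinner : ∑ j : Fin 3, ∑ j' : Fin 3, (if j = j' then 0 else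
        ‖α v‖ ^ 2 * ‖β v j‖ ^ 2 *
          ‖α' v‖ ^ 2 * ‖β' v j'‖ ^ 2)
        = ‖α v‖ ^ 2 * ‖α' v‖ ^ 2 *
          ((∑ j, ‖β v j‖ ^ 2) * (∑ j, ‖β' v j‖ ^ 2)
            - ∑ j, ‖β v j‖ ^ 2 * ‖β' v j‖ ^ 2) := by
      simp [Fin.sum_univ_three]
      ring
    rw [hβ v, hβ' v, one_mul] at hinner
    have hnum : (1:ℝ)/(6000*(m:ℝ)^2)
        ≤ (41/(1200*(m:ℝ))) * (41/(1200*(m:ℝ))) * (3/20) := by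
      have e : (41/(1200*(m:ℝ))) * (41/(1200*(m:ℝ))) * (3/20)
          = 5043/(28800000*(m:ℝ)^2) := by
        field_simp; ring
      rw [e, div_le_div_iff₀ (by positivity) (by positivity)]
      nlinarith [sq_nonneg (m:ℝ)]
    have hstep : (41/(1200*(m:ℝ))) * (41/(1200*(m:ℝ))) * (3/20)
        ≤ ‖α v‖ ^ 2 * ‖α' v‖ ^ 2 *
          (1 - ∑ j, ‖β v j‖ ^ 2 * ‖β' v j‖ ^ 2) := by
      gcongr
      · exact hA v
      · exact hA' v
      · linarith
    have hRsv : ‖α v‖ ^ 2 * ‖α' v‖ ^ 2 *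
          (1 - ∑ j, ‖β v j‖ ^ 2 * ‖β' v j‖ ^ 2)
        ≤ ∑ w, ∑ j, ∑ j', (if j = j' then 0 else
          ‖α w‖ ^ 2 * ‖β w j‖ ^ 2 *
            ‖α' w‖ ^ 2 * ‖β' w j'‖ ^ 2) := by
      rw [← hinner]
      exact Finset.single_le_sum (fun w _ => hsv_nonneg w) (Finset.mem_univ v)
    have hRe : (0:ℝ) ≤ ∑ u, ∑ v, (if G.Adj u v ∧ u < v then ∑ j : Fin 3,
        (‖α u‖ ^ 2 * ‖β u j‖ ^ 2 *
            ‖α' v‖ ^ 2 * ‖β' v j‖ ^ 2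
          + ‖α v‖ ^ 2 * ‖β v j‖ ^ 2 *
            ‖α' u‖ ^ 2 * ‖β' u j‖ ^ 2) else 0) :=
      Finset.sum_nonneg fun u _ => Finset.sum_nonneg fun w _ => hedge_nonneg u w
    linarith
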